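/- Let s ≥ 1 be an integer and c_1 < … < c_s be s distinct real numbers symmetric with respect to 1/2 (c_i + c_{s+1−i} = 1 for all i). If the polynomial τ(π) has no root in the closed left half-plane ℂ⁻ = {z ∈ ℂ : Re(z) ≤ 0}, then the associated Runge–Kutta collocation method is Â-stable (A-stable, AS-stable and ASI-stable). -/

import Mathlib

open Polynomial Matrix MeasureTheory

noncomputable section

/-- Lagrange basis function `ℓ_i(t) = ∏_{j≠i} (t - c_j)/(c_i - c_j)`. -/
def lagrangeFun (s : ℕ) (c : Fin s → ℝ) (i : Fin s) (t : ℝ) : ℝ :=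
  ∏ j ∈ Finset.univ.erase i, (t - c j) / (c i - c j)

/-- Coefficient matrix `A` of the collocation method: `a_{ij} = ∫_0^{c_i} ℓ_j`. -/
def collocA (s : ℕ) (c : Fin s → ℝ) : Matrix (Fin s) (Fin s) ℝ :=
  Matrix.of fun i j => ∫ t in (0:ℝ)..(c i), lagrangeFun s c j t

/-- Weight vector `b` of the collocation method: `b_i = ∫_0^1 ℓ_i`. -/
def collocB (s : ℕ) (c : Fin s → ℝ) : Fin s → ℝ :=
  fun i => ∫ t in (0:ℝ)..(1:ℝ), lagrangeFun s c i t

/-- `π = ∏ (X - c_i)`. -/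
def piPoly (s : ℕ) (c : Fin s → ℝ) : Polynomial ℝ :=
  ∏ i : Fin s, (Polynomial.X - Polynomial.C (c i))

/-- The linear map `τ` sending `Σ a_k X^k` to `Σ k! a_k X^k`. -/
def tauP (p : Polynomial ℝ) : Polynomial ℝ :=
  ∑ k ∈ p.support, Polynomial.C ((k.factorial : ℝ) * p.coeff k) * Polynomial.X ^ k

/-- The matrix `A` viewed as a complex matrix. -/
def collocAC (s : ℕ) (c : Fin s → ℝ) : Matrix (Fin s) (Fin s) ℂ :=
  (collocA s c).map (fun x => (x : ℂ))

/-- The weight vector `b` viewed as a complex vector. -/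
def collocBC (s : ℕ) (c : Fin s → ℝ) : Fin s → ℂ :=
  fun i => (collocB s c i : ℂ)

/-- The linear stability function `R(λ) = 1 + λ bᵀ (I - λ A)⁻¹ 𝟙`. -/
def stabR (s : ℕ) (c : Fin s → ℝ) (lam : ℂ) : ℂ :=
  1 + lam * (collocBC s c ⬝ᵥ ((1 - lam • collocAC s c)⁻¹ *ᵥ (fun _ => 1)))

/-- A-stability: `|R(λ)| ≤ 1` on the closed left half-plane (where defined). -/
def AStable (s : ℕ) (c : Fin s → ℝ) : Prop :=
  ∀ lam : ℂ, lam.re ≤ 0 → IsUnit (1 - lam • collocAC s c).det →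
    ‖stabR s c lam‖ ≤ 1

/-- I-stability: `|R(λ)| ≤ 1` on the imaginary axis (where defined). -/
def IStable (s : ℕ) (c : Fin s → ℝ) : Prop :=
  ∀ lam : ℂ, lam.re = 0 → IsUnit (1 - lam • collocAC s c).det →
    ‖stabR s c lam‖ ≤ 1

/-- AS-stability: `I - λA` invertible on `ℂ⁻` and `λ bᵀ (I - λA)⁻¹` uniformly bounded there. -/
def ASStable (s : ℕ) (c : Fin s → ℝ) : Prop :=
  (∀ lam : ℂ, lam.re ≤ 0 → IsUnit (1 - lam • collocAC s c).det) ∧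
  ∃ M : ℝ, ∀ lam : ℂ, lam.re ≤ 0 → ∀ j,
    ‖lam * (collocBC s c ᵥ* (1 - lam • collocAC s c)⁻¹) j‖ ≤ M

/-- ASI-stability: `I - λA` invertible on `ℂ⁻` and `(I - λA)⁻¹` uniformly bounded there. -/
def ASIStable (s : ℕ) (c : Fin s → ℝ) : Prop :=
  (∀ lam : ℂ, lam.re ≤ 0 → IsUnit (1 - lam • collocAC s c).det) ∧
  ∃ M : ℝ, ∀ lam : ℂ, lam.re ≤ 0 → ∀ i j,
    ‖(1 - lam • collocAC s c)⁻¹ i j‖ ≤ M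

/-- IS-stability: `I - λA` invertible on `iℝ` and `λ bᵀ (I - λA)⁻¹` uniformly bounded there. -/
def ISStable (s : ℕ) (c : Fin s → ℝ) : Prop :=
  (∀ lam : ℂ, lam.re = 0 → IsUnit (1 - lam • collocAC s c).det) ∧
  ∃ M : ℝ, ∀ lam : ℂ, lam.re = 0 → ∀ j,
    ‖lam * (collocBC s c ᵥ* (1 - lam • collocAC s c)⁻¹) j‖ ≤ M

/-- ISI-stability: `I - λA` invertible on `iℝ` and `(I - λA)⁻¹` uniformly bounded there. -/
def ISIStable (s : ℕ) (c : Fin s → ℝ) : Prop :=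
  (∀ lam : ℂ, lam.re = 0 → IsUnit (1 - lam • collocAC s c).det) ∧
  ∃ M : ℝ, ∀ lam : ℂ, lam.re = 0 → ∀ i j,
    ‖(1 - lam • collocAC s c)⁻¹ i j‖ ≤ M

end


noncomputable section AuxProof
/-- polynomial antiderivative -/
def antider (p : ℝ[X]) : ℝ[X] := p.sum fun k a => C (a/(k+1)) * X^(k+1)

lemma derivative_antider (p : ℝ[X]) : derivative (antider p) = p := by
  rw [antider, Polynomial.sum, map_sum]
  conv_rhs => rw [p.as_sum_support_C_mul_X_pow]
  refine Finset.sum_congr rfl fun k hk => ?_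
  rw [derivative_C_mul, derivative_X_pow]
  push_cast
  rw [← mul_assoc, ← C_mul, div_mul_cancel₀]
  positivity

lemma antider_eval_zero (p : ℝ[X]) : (antider p).eval 0 = 0 := by
  rw [antider, Polynomial.sum, eval_finset_sum]
  refine Finset.sum_eq_zero fun k hk => by simp

lemma natDegree_antider_le (p : ℝ[X]) : (antider p).natDegree ≤ p.natDegree + 1 := by
  refine (natDegree_sum_le _ _).trans ?_
  rw [Finset.fold_max_le]
  refine ⟨by omega, fun k hk => ?_⟩
  refine (natDegree_C_mul_le _ _).trans ?_
  simp only [natDegree_X_pow, Function.comp]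
  have := le_natDegree_of_mem_supp k hk
  omega

lemma integral_poly (p : ℝ[X]) (a b : ℝ) :
    ∫ t in a..b, p.eval t = (antider p).eval b - (antider p).eval a := by
  have : ∀ t, p.eval t = deriv (fun x => (antider p).eval x) t := by
    intro t; rw [Polynomial.deriv, derivative_antider]
  rw [intervalIntegral.integral_congr (fun t _ => this t)]
  exact intervalIntegral.integral_deriv_eq_sub
    (fun t _ => (antider p).differentiableAt) (by
      apply Continuous.intervalIntegrable
      have h2 : (deriv fun x => (antider p).eval x) = fun x => p.eval x := by
        funext t; exact (this t).symm
      rw [h2]; exact p.continuous)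

def LL (s : ℕ) (c : Fin s → ℝ) (i : Fin s) : ℝ[X] :=
  antider (Lagrange.basis Finset.univ c i)

lemma lagrangeFun_eq (s : ℕ) (c : Fin s → ℝ) (i : Fin s) (t : ℝ) :
    lagrangeFun s c i t = (Lagrange.basis Finset.univ c i).eval t := by
  rw [lagrangeFun, Lagrange.basis, eval_prod]
  refine Finset.prod_congr rfl fun j hj => ?_
  rw [Lagrange.basisDivisor, eval_mul, eval_C, eval_sub, eval_X, eval_C]
  rw [div_eq_inv_mul]

lemma LL_eval_zero (s : ℕ) (c : Fin s → ℝ) (i : Fin s) : (LL s c i).eval 0 = 0 :=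
  antider_eval_zero _

lemma collocA_eq (s : ℕ) (c : Fin s → ℝ) (i j : Fin s) :
    collocA s c i j = (LL s c j).eval (c i) := by
  rw [collocA, Matrix.of_apply]
  rw [intervalIntegral.integral_congr (fun t _ => lagrangeFun_eq s c j t)]
  rw [integral_poly, LL, antider_eval_zero, sub_zero]

lemma collocB_eq (s : ℕ) (c : Fin s → ℝ) (i : Fin s) :
    collocB s c i = (LL s c i).eval 1 := by
  rw [collocB]
  rw [intervalIntegral.integral_congr (fun t _ => lagrangeFun_eq s c i t)]
  rw [integral_poly, LL, antider_eval_zero, sub_zero]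

-- test small lemmas first
lemma map_eval_cast (p : ℝ[X]) (x : ℝ) :
    (p.map (algebraMap ℝ ℂ)).eval ((x : ℂ)) = ((p.eval x : ℝ) : ℂ) := by
  rw [eval_map]
  have : ((x:ℂ)) = algebraMap ℝ ℂ x := rfl
  rw [this, eval₂_at_apply]
  rfl

lemma deriv_self_eq_zero {lam : ℂ} (hlam : lam ≠ 0) {W : ℂ[X]}
    (h : derivative W = lam • W) : W = 0 := by
  by_contra hW
  have h1 : (derivative W).coeff W.natDegree = (lam • W).coeff W.natDegree := by rw [h]
  rw [coeff_derivative, coeff_smul, coeff_natDegree_succ_eq_zero] at h1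
  have : W.leadingCoeff ≠ 0 := leadingCoeff_ne_zero.mpr hW
  rw [leadingCoeff] at this
  simp only [zero_mul, smul_eq_mul] at h1
  rcases mul_eq_zero.mp h1.symm with h | h
  exacts [absurd h hlam, this h]


section QQ
variable (s : ℕ) (c : Fin s → ℝ)

noncomputable def piC : ℂ[X] := ∏ i : Fin s, (X - C ((c i : ℂ)))

lemma piC_monic : (piC s c).Monic := monic_prod_of_monic _ _ fun i _ => monic_X_sub_C _

lemma natDegree_piC : (piC s c).natDegree = s := by
  rw [piC, natDegree_prod _ _ fun i _ => X_sub_C_ne_zero _]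
  simp [natDegree_X_sub_C]

noncomputable def Qp (lam : ℂ) : ℂ[X] :=
  ∑ j ∈ Finset.range (s+1), lam^(s-j) • derivative^[j] (piC s c)

lemma Qp_ode (lam : ℂ) :
    lam • Qp s c lam - derivative (Qp s c lam) = (lam^(s+1)) • piC s c := by
  have hzero : derivative^[s+1] (piC s c) = 0 :=
    iterate_derivative_eq_zero (by rw [natDegree_piC]; omega)
  have key : ∀ j ∈ Finset.range (s+1),
      lam • (lam^(s-j) • derivative^[j] (piC s c))
        - derivative (lam^(s-j) • derivative^[j] (piC s c))
      = (fun j => lam^(s-j+1) • derivative^[j] (piC s c)) j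
        - (fun j => lam^(s-j+1) • derivative^[j] (piC s c)) (j+1) := by
    intro j hj
    rw [Finset.mem_range] at hj
    simp only [derivative_smul, smul_smul, ← Function.iterate_succ_apply', ← pow_succ']
    rcases Nat.lt_or_ge j s with hjs | hjs
    · have h1 : s - (j+1) + 1 = s - j := by omega
      rw [h1]
    · have hjeq : j = s := by omega
      subst hjeq
      rw [hzero]
      simp
  calc lam • Qp s c lam - derivative (Qp s c lam)
      = ∑ j ∈ Finset.range (s+1),
          (lam • (lam^(s-j) • derivative^[j] (piC s c))
            - derivative (lam^(s-j) • derivative^[j] (piC s c))) := by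
        rw [Qp, Finset.smul_sum, derivative_sum, ← Finset.sum_sub_distrib]
    _ = ∑ j ∈ Finset.range (s+1),
          ((fun j => lam^(s-j+1) • derivative^[j] (piC s c)) j
            - (fun j => lam^(s-j+1) • derivative^[j] (piC s c)) (j+1)) :=
        Finset.sum_congr rfl key
    _ = (lam^(s+1)) • piC s c := by
        rw [Finset.sum_range_sub']
        simp [hzero, Nat.sub_self]

lemma natDegree_piPoly : (piPoly s c).natDegree = s := by
  rw [piPoly, natDegree_prod _ _ fun i _ => X_sub_C_ne_zero _]
  simp [natDegree_X_sub_C]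

lemma piC_eq_map : piC s c = (piPoly s c).map (algebraMap ℝ ℂ) := by
  rw [piC, piPoly, Polynomial.map_prod]
  refine Finset.prod_congr rfl fun i _ => ?_
  rw [Polynomial.map_sub, Polynomial.map_X, Polynomial.map_C]
  rfl

lemma piC_coeff (j : ℕ) : (piC s c).coeff j = ((piPoly s c).coeff j : ℂ) := by
  rw [piC_eq_map, coeff_map]; rfl

lemma Qp_eval_zero (lam : ℂ) :
    (Qp s c lam).eval 0 = ∑ j ∈ Finset.range (s+1),
      lam^(s-j) * ((j.factorial : ℂ) * ((piPoly s c).coeff j : ℂ)) := by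
  rw [Qp, eval_finset_sum]
  refine Finset.sum_congr rfl fun j hj => ?_
  rw [eval_smul, smul_eq_mul]
  congr 1
  rw [← coeff_zero_eq_eval_zero, coeff_iterate_derivative, Nat.zero_add,
    Nat.descFactorial_self, ← piC_coeff, nsmul_eq_mul]

lemma aeval_tauP (p : ℝ[X]) (z : ℂ) :
    aeval z (tauP p) = ∑ k ∈ p.support, ((k.factorial : ℂ) * (p.coeff k : ℂ)) * z^k := by
  rw [tauP, map_sum]
  refine Finset.sum_congr rfl fun k _ => ?_
  rw [_root_.map_mul, aeval_C, map_pow, aeval_X]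
  norm_num

lemma Qp_eval_zero_aeval (lam : ℂ) (hlam : lam ≠ 0) :
    (Qp s c lam).eval 0 = lam^s * aeval lam⁻¹ (tauP (piPoly s c)) := by
  rw [Qp_eval_zero, aeval_tauP, Finset.mul_sum]
  have hsub : (piPoly s c).support ⊆ Finset.range (s+1) := by
    intro k hk
    rw [Finset.mem_range]
    have := le_natDegree_of_mem_supp k hk
    rw [natDegree_piPoly] at this
    omega
  rw [← Finset.sum_subset hsub (fun k _ hk => by
    rw [notMem_support_iff.mp hk]; simp)]
  refine Finset.sum_congr rfl fun k hk => ?_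
  have hks : k ≤ s := by
    have := le_natDegree_of_mem_supp k hk
    rw [natDegree_piPoly] at this; omega
  rw [inv_pow, pow_sub₀ lam hlam hks]
  ring

lemma comp_rev (hsym : ∀ i : Fin s, c i + c i.rev = 1) :
    (piC s c).comp (C 1 - X) = (-1:ℂ)^s • piC s c := by
  have h1 : ∀ i : Fin s, ((X : ℂ[X]) - C ((c i : ℂ))).comp (C 1 - X)
      = -(X - C ((c (i.rev) : ℂ))) := by
    intro i
    have h2 : ((c i.rev : ℝ) : ℂ) = 1 - (c i : ℂ) := by
      have h := hsym i
      have h' : c i.rev = 1 - c i := by linarith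
      rw [h']; push_cast; ring
    rw [sub_comp, X_comp, C_comp, h2, C_sub, C_1]
    ring
  simp only [piC]
  rw [prod_comp]
  simp_rw [h1]
  have h3 : ∀ i : Fin s, -((X:ℂ[X]) - C ((c (i.rev) : ℂ)))
      = (-1 : ℂ[X]) * (X - C ((c (i.rev) : ℂ))) := fun i => by ring
  simp_rw [h3]
  rw [Finset.prod_mul_distrib, Finset.prod_const, Finset.card_univ, Fintype.card_fin]
  have h4 : ∏ i : Fin s, ((X:ℂ[X]) - C ((c (i.rev) : ℂ)))
      = ∏ i : Fin s, ((X:ℂ[X]) - C ((c i : ℂ))) :=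
    Fintype.prod_equiv (Fin.revPerm) _ _ (fun i => rfl)
  rw [h4]
  rw [smul_eq_C_mul, C_pow, C_neg, C_1]

lemma iterate_comp_rev (hsym : ∀ i : Fin s, c i + c i.rev = 1) (j : ℕ) :
    (-1:ℂ)^j • (derivative^[j] (piC s c)).comp (C 1 - X)
      = (-1:ℂ)^s • derivative^[j] (piC s c) := by
  induction j with
  | zero => simpa using comp_rev s c hsym
  | succ j ih =>
    have ihd := congrArg derivative ih
    rw [derivative_smul, derivative_smul, derivative_comp] at ihd
    have hq : derivative ((C 1 : ℂ[X]) - X) = -1 := by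
      rw [derivative_sub, derivative_C, derivative_X]; ring
    rw [hq, neg_one_mul] at ihd
    rw [Function.iterate_succ_apply', pow_succ, mul_smul, neg_one_smul]
    exact ihd

lemma eval_one_iterate (hsym : ∀ i : Fin s, c i + c i.rev = 1) (j : ℕ) :
    (derivative^[j] (piC s c)).eval 1
      = (-1:ℂ)^s * (-1:ℂ)^j * (derivative^[j] (piC s c)).eval 0 := by
  have h := congrArg (eval 0) (iterate_comp_rev s c hsym j)
  rw [eval_smul, eval_smul, eval_comp] at h
  simp only [eval_sub, eval_C, eval_X, sub_zero, smul_eq_mul] at h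
  have hsq : ((-1:ℂ)^j) * ((-1:ℂ)^j) = 1 := by
    rw [← pow_add]
    have : j + j = 2 * j := by omega
    rw [this, pow_mul]
    norm_num
  calc (derivative^[j] (piC s c)).eval 1
      = (-1:ℂ)^j * ((-1:ℂ)^j * (derivative^[j] (piC s c)).eval 1) := by
        rw [← mul_assoc, hsq, one_mul]
    _ = (-1:ℂ)^j * ((-1:ℂ)^s * (derivative^[j] (piC s c)).eval 0) := by rw [h]
    _ = (-1:ℂ)^s * (-1:ℂ)^j * (derivative^[j] (piC s c)).eval 0 := by ring

lemma Qp_eval_one (hsym : ∀ i : Fin s, c i + c i.rev = 1) (lam : ℂ) :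
    (Qp s c lam).eval 1 = (Qp s c (-lam)).eval 0 := by
  rw [Qp, Qp, eval_finset_sum, eval_finset_sum]
  refine Finset.sum_congr rfl fun j hj => ?_
  rw [Finset.mem_range] at hj
  rw [eval_smul, eval_smul, smul_eq_mul, smul_eq_mul, eval_one_iterate s c hsym]
  have hneg : (-lam)^(s-j) = (-1:ℂ)^s * (-1:ℂ)^j * lam^(s-j) := by
    rw [neg_pow]
    congr 1
    have h2 : s + j = (s - j) + 2*j := by omega
    calc (-1:ℂ)^(s-j) = (-1:ℂ)^(s-j) * ((-1:ℂ)^2)^j := by norm_num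
      _ = (-1:ℂ)^(s-j+2*j) := by rw [← pow_mul, ← pow_add]
      _ = (-1:ℂ)^(s+j) := by rw [← h2]
      _ = (-1:ℂ)^s * (-1:ℂ)^j := by rw [pow_add]
  rw [hneg]
  ring

end QQ

lemma multiset_prod_map_le (m : Multiset ℂ) (f g : ℂ → ℝ) (hf : ∀ x, 0 ≤ f x)
    (h : ∀ x ∈ m, f x ≤ g x) : (m.map f).prod ≤ (m.map g).prod := by
  induction m using Multiset.induction with
  | empty => simp
  | cons a t ih =>
    simp only [Multiset.map_cons, Multiset.prod_cons]
    have hprod : (0:ℝ) ≤ (t.map f).prod := by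
      apply Multiset.prod_nonneg
      intro x hx
      rcases Multiset.mem_map.mp hx with ⟨y, _, rfl⟩
      exact hf y
    have hga : 0 ≤ g a := (hf a).trans (h a (Multiset.mem_cons_self a t))
    exact mul_le_mul (h a (Multiset.mem_cons_self a t))
      (ih fun x hx => h x (Multiset.mem_cons_of_mem hx)) hprod hga

lemma abs_add_conj_le (z r : ℂ) (hz : z.re ≤ 0) (hr : 0 ≤ r.re) :
    ‖z + (starRingEnd ℂ) r‖ ≤ ‖z - r‖ := by
  rw [Complex.norm_def, Complex.norm_def]
  apply Real.sqrt_le_sqrt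
  simp only [Complex.normSq_apply, Complex.add_re, Complex.add_im, Complex.sub_re,
    Complex.sub_im, Complex.conj_re, Complex.conj_im]
  nlinarith [mul_nonneg (neg_nonneg.mpr hz) hr]

lemma abs_halfplane (F0 : ℝ[X])
    (hroots : ∀ r : ℂ, (F0.map (algebraMap ℝ ℂ)).IsRoot r → 0 ≤ r.re)
    (z : ℂ) (hz : z.re ≤ 0) :
    ‖(F0.map (algebraMap ℝ ℂ)).eval (-z)‖
      ≤ ‖(F0.map (algebraMap ℝ ℂ)).eval z‖ := by
  set F := F0.map (algebraMap ℝ ℂ) with hFdef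
  by_cases hF : F = 0
  · simp [hF]
  have hsplit : F.Splits := IsAlgClosed.splits F
  have hfact := hsplit.eq_prod_roots
  have habs : ∀ x : ℂ, ‖F.eval x‖
      = ‖F.leadingCoeff‖ * ((F.roots.map (fun r => ‖x - r‖)).prod) := by
    intro x
    conv_lhs => rw [hfact]
    rw [eval_mul, eval_C, norm_mul]
    congr 1
    rw [eval_multiset_prod, show ∀ m : Multiset ℂ, ‖m.prod‖ = (m.map (‖·‖)).prod from
      fun m => map_multiset_prod (normHom : ℂ →*₀ ℝ) m, Multiset.map_map, Multiset.map_map]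
    congr 1
    refine Multiset.map_congr rfl fun r _ => ?_
    simp
  have hconj : F.roots.map (starRingEnd ℂ) = F.roots := by
    have hFc : F.map (starRingEnd ℂ) = F := by
      rw [hFdef, Polynomial.map_map]
      congr 1
      refine RingHom.ext fun x => ?_
      simp [Complex.conj_ofReal]
    conv_rhs => rw [← hFc]
    exact (hsplit.roots_map (starRingEnd ℂ)).symm
  rw [habs, habs]
  apply mul_le_mul_of_nonneg_left _ (norm_nonneg _)
  have step1 : F.roots.map (fun r => ‖-z - r‖)
      = F.roots.map (fun r => ‖z + (starRingEnd ℂ) r‖) := by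
    conv_lhs => rw [← hconj, Multiset.map_map]
    refine Multiset.map_congr rfl fun r _ => ?_
    simp only [Function.comp_apply]
    rw [show -z - (starRingEnd ℂ) r = -(z + (starRingEnd ℂ) r) by ring, norm_neg]
  rw [step1]
  apply multiset_prod_map_le
  · intro x
    exact norm_nonneg _
  · intro r hr
    have hre : 0 ≤ r.re := hroots r ((mem_roots hF).mp hr)
    exact abs_add_conj_le z r hz hre

section Main
variable (s : ℕ) (c : Fin s → ℝ)

noncomputable def LLC (j : Fin s) : ℂ[X] := (LL s c j).map (algebraMap ℝ ℂ)

noncomputable def Pw (w : Fin s → ℂ) : ℂ[X] := ∑ j, w j • LLC s c j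

lemma mulVec_eval (w : Fin s → ℂ) (i : Fin s) :
    (collocAC s c *ᵥ w) i = (Pw s c w).eval ((c i : ℂ)) := by
  rw [Pw, eval_finset_sum, Matrix.mulVec, dotProduct]
  refine Finset.sum_congr rfl fun j _ => ?_
  simp only [collocAC, Matrix.map_apply, collocA_eq, LLC, map_eval_cast, eval_smul, smul_eq_mul]
  ring

lemma dot_b (w : Fin s → ℂ) : collocBC s c ⬝ᵥ w = (Pw s c w).eval 1 := by
  rw [Pw, eval_finset_sum, dotProduct]
  refine Finset.sum_congr rfl fun j _ => ?_
  have h1 : ((1:ℝ):ℂ) = (1:ℂ) := by norm_num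
  simp only [collocBC, collocB_eq, LLC, eval_smul, smul_eq_mul, ← h1, map_eval_cast]
  ring

lemma Pw_eval_zero (w : Fin s → ℂ) : (Pw s c w).eval 0 = 0 := by
  rw [Pw, eval_finset_sum]
  refine Finset.sum_eq_zero fun j _ => ?_
  have h0 : ((0:ℝ):ℂ) = (0:ℂ) := by norm_num
  rw [eval_smul, ← h0, LLC, map_eval_cast, LL_eval_zero]
  simp

lemma deriv_Pw (w : Fin s → ℂ) : derivative (Pw s c w)
    = ∑ j, w j • (Lagrange.basis Finset.univ c j).map (algebraMap ℝ ℂ) := by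
  rw [Pw, map_sum]
  refine Finset.sum_congr rfl fun j _ => ?_
  rw [derivative_smul, LLC, derivative_map, LL, derivative_antider]

lemma deriv_Pw_eval (hinj : Function.Injective c) (w : Fin s → ℂ) (i : Fin s) :
    (derivative (Pw s c w)).eval ((c i : ℂ)) = w i := by
  rw [deriv_Pw, eval_finset_sum]
  rw [Finset.sum_eq_single i]
  · rw [eval_smul, map_eval_cast, Lagrange.eval_basis_self (Set.injOn_of_injective hinj)
      (Finset.mem_univ i)]
    simp
  · intro j _ hj
    rw [eval_smul, map_eval_cast, Lagrange.eval_basis_of_ne hj (Finset.mem_univ i)]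
    simp
  · intro h
    exact absurd (Finset.mem_univ i) h

lemma natDegree_Pw_le (hs : 1 ≤ s) (hinj : Function.Injective c) (w : Fin s → ℂ) :
    (Pw s c w).natDegree ≤ s := by
  rw [Pw]
  refine (natDegree_sum_le _ _).trans ?_
  rw [Finset.fold_max_le]
  refine ⟨by omega, fun j _ => ?_⟩
  refine (natDegree_smul_le _ _).trans ?_
  show ((LL s c j).map (algebraMap ℝ ℂ)).natDegree ≤ s
  rw [natDegree_map]
  refine (natDegree_antider_le _).trans ?_
  rw [Lagrange.natDegree_basis (Set.injOn_of_injective hinj) (Finset.mem_univ j)]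
  rw [Finset.card_univ, Fintype.card_fin]
  omega

lemma piC_eval_c (i : Fin s) : (piC s c).eval ((c i : ℂ)) = 0 := by
  rw [piC, eval_prod]
  apply Finset.prod_eq_zero (Finset.mem_univ i)
  simp

lemma eq_C_mul_piC (hs : 1 ≤ s) (hinjC : Function.Injective fun i : Fin s => ((c i : ℂ)))
    (G : ℂ[X]) (hdeg : G.natDegree ≤ s) (hvan : ∀ i, G.eval ((c i : ℂ)) = 0) :
    G = C (G.coeff s) * piC s c := by
  have hc1 : (piC s c).coeff s = 1 := by
    have h := (piC_monic s c).coeff_natDegree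
    rwa [natDegree_piC] at h
  set H := G - C (G.coeff s) * piC s c with hH
  have hHdeg : H.natDegree ≤ s := by
    refine (natDegree_sub_le _ _).trans (max_le hdeg ((natDegree_C_mul_le _ _).trans ?_))
    exact (natDegree_piC s c).le
  have hHcoeff : H.coeff s = 0 := by
    rw [hH, coeff_sub, coeff_C_mul, hc1, mul_one, sub_self]
  have hlt : H.natDegree < s := by
    rcases lt_or_eq_of_le hHdeg with h | h
    · exact h
    · exfalso
      have hl : H.leadingCoeff = 0 := by rw [leadingCoeff, h, hHcoeff]
      have hH0 : H = 0 := leadingCoeff_eq_zero.mp hl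
      rw [hH0, natDegree_zero] at h
      omega
  have hzero : H = 0 := by
    apply eq_zero_of_natDegree_lt_card_of_eval_eq_zero H hinjC
    · intro i
      rw [hH, eval_sub, eval_mul, eval_C, hvan i, piC_eval_c, mul_zero, sub_self]
    · rwa [Fintype.card_fin]
  have := sub_eq_zero.mp hzero
  exact this

lemma main_ode (hs : 1 ≤ s) (hinj : Function.Injective c) (lam : ℂ) (hlam : lam ≠ 0)
    (v0 : ℂ) (w : Fin s → ℂ) (hw : ∀ i, w i = v0 + lam * (collocAC s c *ᵥ w) i) :
    ∃ K : ℂ, lam^(s+1) • (C v0 + lam • Pw s c w) + K • Qp s c lam = 0 := by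
  have hinjC : Function.Injective (fun i : Fin s => ((c i : ℂ))) := by
    intro i j h
    simp only at h
    exact hinj (by exact_mod_cast h)
  set u : ℂ[X] := C v0 + lam • Pw s c w with hu
  have hueval : ∀ i, u.eval ((c i : ℂ)) = w i := by
    intro i
    rw [hu, eval_add, eval_C, eval_smul, smul_eq_mul, ← mulVec_eval]
    exact (hw i).symm
  have hderiv : ∀ i, (derivative u).eval ((c i : ℂ)) = lam * w i := by
    intro i
    rw [hu, derivative_add, derivative_C, derivative_smul, zero_add, eval_smul, smul_eq_mul,
      deriv_Pw_eval s c hinj]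
  set G := derivative u - lam • u with hG
  have hGvan : ∀ i, G.eval ((c i : ℂ)) = 0 := by
    intro i
    rw [hG, eval_sub, eval_smul, hderiv i, smul_eq_mul, hueval i, sub_self]
  have hudeg : u.natDegree ≤ s := by
    rw [hu]
    refine (natDegree_add_le _ _).trans (max_le ?_ ?_)
    · rw [natDegree_C]; omega
    · exact (natDegree_smul_le _ _).trans (natDegree_Pw_le s c hs hinj w)
  have hGdeg : G.natDegree ≤ s := by
    refine (natDegree_sub_le _ _).trans (max_le ?_ ?_)
    · exact (natDegree_derivative_le u).trans ((Nat.sub_le _ _).trans hudeg)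
    · exact (natDegree_smul_le _ _).trans hudeg
  have hGfact : G = C (G.coeff s) * piC s c := eq_C_mul_piC s c hs hinjC G hGdeg hGvan
  refine ⟨G.coeff s, ?_⟩
  apply deriv_self_eq_zero hlam
  rw [derivative_add, derivative_smul, derivative_smul]
  have hG' : derivative u = lam • u + C (G.coeff s) * piC s c := by
    rw [← hGfact, hG]
    ring
  have h2 : derivative (Qp s c lam) = lam • Qp s c lam - lam^(s+1) • piC s c := by
    have hQ := Qp_ode s c lam
    rw [← hQ]
    ring
  rw [hG', h2]
  simp only [smul_eq_C_mul, smul_add]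
  ring

end Main

section Main2
variable (s : ℕ) (c : Fin s → ℝ)

lemma Qp0_ne (hroot : ∀ z : ℂ, z.re ≤ 0 → Polynomial.aeval z (tauP (piPoly s c)) ≠ 0)
    (lam : ℂ) (hlam : lam ≠ 0) (hre : lam.re ≤ 0) : (Qp s c lam).eval 0 ≠ 0 := by
  rw [Qp_eval_zero_aeval s c lam hlam]
  apply mul_ne_zero (pow_ne_zero _ hlam)
  apply hroot
  rw [Complex.inv_re]
  exact div_nonpos_of_nonpos_of_nonneg hre (Complex.normSq_nonneg lam)

lemma hw_of_mulVec (lam : ℂ) (v : Fin s → ℂ) (h : (1 - lam • collocAC s c) *ᵥ v = 0) :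
    ∀ i, v i = 0 + lam * (collocAC s c *ᵥ v) i := by
  intro i
  have h1 := congrFun h i
  rw [Matrix.sub_mulVec, Matrix.one_mulVec, Matrix.smul_mulVec] at h1
  have h2 : v i - lam * (collocAC s c *ᵥ v) i = 0 := h1
  linear_combination h2

lemma unit_det (hs : 1 ≤ s) (hinj : Function.Injective c)
    (hroot : ∀ z : ℂ, z.re ≤ 0 → Polynomial.aeval z (tauP (piPoly s c)) ≠ 0)
    (lam : ℂ) (hre : lam.re ≤ 0) : IsUnit (1 - lam • collocAC s c).det := by
  by_cases hlam : lam = 0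
  · subst hlam
    simp
  rw [isUnit_iff_ne_zero]
  intro hdet
  obtain ⟨v, hv0, hv⟩ := (Matrix.exists_mulVec_eq_zero_iff).mpr hdet
  have hw := hw_of_mulVec s c lam v hv
  obtain ⟨K, hK⟩ := main_ode s c hs hinj lam hlam 0 v hw
  have h0 := congrArg (eval 0) hK
  rw [eval_add, eval_smul, eval_smul, eval_add, eval_C, eval_smul, Pw_eval_zero] at h0
  simp only [smul_eq_mul, mul_zero, add_zero, eval_zero, zero_add] at h0
  have hKz : K = 0 := by
    have hQ0 := Qp0_ne s c hroot lam hlam hre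
    have : K * (Qp s c lam).eval 0 = 0 := by linear_combination h0
    rcases mul_eq_zero.mp this with h | h
    · exact h
    · exact absurd h hQ0
  rw [hKz, zero_smul, add_zero] at hK
  have hPw : Pw s c v = 0 := by
    have h1 : (lam^(s+1) * lam) • Pw s c v = 0 := by
      rw [mul_smul]
      calc lam ^ (s+1) • lam • Pw s c v
          = lam^(s+1) • (C 0 + lam • Pw s c v) := by rw [C_0, zero_add]
        _ = 0 := hK
    rcases smul_eq_zero.mp h1 with h | h
    · exact absurd h (mul_ne_zero (pow_ne_zero _ hlam) hlam)
    · exact h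
  apply hv0
  funext i
  rw [hw i, mulVec_eval, hPw]
  simp

end Main2

section Main3
variable (s : ℕ) (c : Fin s → ℝ)

lemma eval_comb (lam K v0 : ℂ) (P Q : ℂ[X])
    (h : lam^(s+1) • (C v0 + lam • P) + K • Q = 0) (x : ℂ) :
    lam^(s+1) * (v0 + lam * P.eval x) + K * Q.eval x = 0 := by
  have h2 := congrArg (eval x) h
  rw [eval_add, eval_smul, eval_smul, eval_add, eval_C, eval_smul] at h2
  simpa [smul_eq_mul] using h2

lemma stabR_formula (hs : 1 ≤ s) (hinj : Function.Injective c)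
    (hsym : ∀ i : Fin s, c i + c i.rev = 1)
    (hroot : ∀ z : ℂ, z.re ≤ 0 → Polynomial.aeval z (tauP (piPoly s c)) ≠ 0)
    (lam : ℂ) (hlam : lam ≠ 0) (hre : lam.re ≤ 0) :
    stabR s c lam = (Qp s c (-lam)).eval 0 / (Qp s c lam).eval 0 := by
  have hdet := unit_det s c hs hinj hroot lam hre
  set w := (1 - lam • collocAC s c)⁻¹ *ᵥ (fun _ => (1:ℂ)) with hwdef
  have h1 : (1 - lam • collocAC s c) *ᵥ w = fun _ => (1:ℂ) := by
    rw [hwdef, Matrix.mulVec_mulVec, Matrix.mul_nonsing_inv _ hdet, Matrix.one_mulVec]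
  have hw : ∀ i, w i = 1 + lam * (collocAC s c *ᵥ w) i := by
    intro i
    have h2 := congrFun h1 i
    rw [Matrix.sub_mulVec, Matrix.one_mulVec, Matrix.smul_mulVec] at h2
    have h3 : w i - lam * ((collocAC s c *ᵥ w) i) = 1 := h2
    linear_combination h3
  obtain ⟨K, hK⟩ := main_ode s c hs hinj lam hlam 1 w hw
  have e0 := eval_comb s lam K 1 _ _ hK 0
  have e1 := eval_comb s lam K 1 _ _ hK 1
  rw [Pw_eval_zero] at e0
  have hQ0 := Qp0_ne s c hroot lam hlam hre
  have hR : stabR s c lam = 1 + lam * (Pw s c w).eval 1 := by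
    rw [stabR, dot_b]
  rw [hR, eq_div_iff hQ0, ← Qp_eval_one s c hsym lam]
  have hcancel : lam^(s+1) * ((1 + lam * (Pw s c w).eval 1) * (Qp s c lam).eval 0)
      = lam^(s+1) * ((Qp s c lam).eval 1) := by
    linear_combination ((Qp s c lam).eval 0) * e1 - ((Qp s c lam).eval 1) * e0
  exact mul_left_cancel₀ (pow_ne_zero _ hlam) hcancel

lemma abs_stabR_le (hs : 1 ≤ s) (hinj : Function.Injective c)
    (hsym : ∀ i : Fin s, c i + c i.rev = 1)
    (hroot : ∀ z : ℂ, z.re ≤ 0 → Polynomial.aeval z (tauP (piPoly s c)) ≠ 0)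
    (lam : ℂ) (hre : lam.re ≤ 0) :
    ‖stabR s c lam‖ ≤ 1 := by
  by_cases hlam : lam = 0
  · subst hlam
    rw [stabR]
    simp
  rw [stabR_formula s c hs hinj hsym hroot lam hlam hre, norm_div]
  have hQ0 := Qp0_ne s c hroot lam hlam hre
  apply div_le_one_of_le₀
  · -- |Qp(-lam)(0)| ≤ |Qp(lam)(0)|
    rw [Qp_eval_zero_aeval s c lam hlam, Qp_eval_zero_aeval s c (-lam) (neg_ne_zero.mpr hlam)]
    rw [norm_mul, norm_mul, norm_pow, norm_pow, norm_neg]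
    have hz : (lam⁻¹).re ≤ 0 := by
      rw [Complex.inv_re]
      exact div_nonpos_of_nonpos_of_nonneg hre (Complex.normSq_nonneg lam)
    have hinv : (-lam)⁻¹ = -(lam⁻¹) := by
      field_simp
    rw [hinv]
    apply mul_le_mul_of_nonneg_left _ (pow_nonneg (norm_nonneg _) s)
    have hhalf := abs_halfplane (tauP (piPoly s c)) ?_ (lam⁻¹) hz
    · have heq : ∀ z : ℂ, aeval z (tauP (piPoly s c))
          = ((tauP (piPoly s c)).map (algebraMap ℝ ℂ)).eval z := by
        intro z
        rw [aeval_def, eval_map]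
      rw [heq, heq]
      exact hhalf
    · intro r hr
      by_contra hneg
      push_neg at hneg
      have : r.re ≤ 0 := le_of_lt hneg
      exact hroot r this (by rw [aeval_def, ← eval_map]; exact hr)
  · exact norm_nonneg _

end Main3

section Main4
variable (s : ℕ) (c : Fin s → ℝ)

lemma tauP_coeff_zero (p : ℝ[X]) : (tauP p).coeff 0 = p.coeff 0 := by
  rw [tauP, finset_sum_coeff]
  by_cases h0 : (0:ℕ) ∈ p.support
  · rw [Finset.sum_eq_single 0]
    · simp
    · intro k _ hk
      rw [coeff_C_mul, coeff_X_pow]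
      simp [Ne.symm hk]
    · intro h
      exact absurd h0 h
  · rw [notMem_support_iff.mp h0]
    apply Finset.sum_eq_zero
    intro k hk
    have hk0 : k ≠ 0 := by
      intro h
      rw [h] at hk
      exact h0 hk
    rw [coeff_C_mul, coeff_X_pow]
    simp [Ne.symm hk0]

lemma c_ne_zero (hroot : ∀ z : ℂ, z.re ≤ 0 → Polynomial.aeval z (tauP (piPoly s c)) ≠ 0)
    (i : Fin s) : c i ≠ 0 := by
  intro hci
  apply hroot 0 (by norm_num)
  rw [aeval_def, eval₂_at_zero, tauP_coeff_zero, coeff_zero_eq_eval_zero, piPoly]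
  rw [eval_prod, Finset.prod_eq_zero (Finset.mem_univ i) (by simp [hci])]
  simp

lemma piC_eval_zero_ne (hroot : ∀ z : ℂ, z.re ≤ 0 → Polynomial.aeval z (tauP (piPoly s c)) ≠ 0) :
    (piC s c).eval 0 ≠ 0 := by
  rw [piC, eval_prod]
  rw [Finset.prod_ne_zero_iff]
  intro i _
  simp only [eval_sub, eval_X, eval_C, zero_sub, neg_ne_zero]
  exact_mod_cast c_ne_zero s c hroot i

lemma detA_ne (hs : 1 ≤ s) (hinj : Function.Injective c)
    (hroot : ∀ z : ℂ, z.re ≤ 0 → Polynomial.aeval z (tauP (piPoly s c)) ≠ 0) :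
    (collocAC s c).det ≠ 0 := by
  intro hdet
  obtain ⟨v, hv0, hv⟩ := Matrix.exists_mulVec_eq_zero_iff.mpr hdet
  have hinjC : Function.Injective (fun i : Fin s => ((c i : ℂ))) := by
    intro i j h
    simp only at h
    exact hinj (by exact_mod_cast h)
  have hvan : ∀ i, (Pw s c v).eval ((c i : ℂ)) = 0 := by
    intro i
    rw [← mulVec_eval, hv]
    rfl
  have hfact := eq_C_mul_piC s c hs hinjC (Pw s c v) (natDegree_Pw_le s c hs hinj v) hvan
  have h0 := congrArg (eval 0) hfact
  rw [Pw_eval_zero, eval_mul, eval_C] at h0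
  have hK0 : (Pw s c v).coeff s = 0 := by
    rcases mul_eq_zero.mp h0.symm with h | h
    · exact h
    · exact absurd h (piC_eval_zero_ne s c hroot)
  rw [hK0, C_0, zero_mul] at hfact
  apply hv0
  funext i
  rw [← deriv_Pw_eval s c hinj v i, hfact]
  simp

/-- generic bound: `σ x * (f x)⁻¹ i j` is bounded on a compact set where `det f x ≠ 0`. -/
lemma bound_smul_inv_on (S : Set ℂ) (hS : IsCompact S) (σ : ℂ → ℂ) (hσ : Continuous σ)
    (f : ℂ → Matrix (Fin s) (Fin s) ℂ) (hf : Continuous f)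
    (hdet : ∀ x ∈ S, (f x).det ≠ 0) :
    ∃ M : ℝ, ∀ x ∈ S, ∀ i j, ‖σ x * (f x)⁻¹ i j‖ ≤ M := by
  classical
  set g : ℂ → (Fin s → Fin s → ℂ) :=
    fun x i j => σ x * (((f x).det)⁻¹ * (f x).adjugate i j) with hg
  have hgc : ContinuousOn g S := by
    apply continuousOn_pi.mpr
    intro i
    apply continuousOn_pi.mpr
    intro j
    apply ContinuousOn.mul hσ.continuousOn
    apply ContinuousOn.mul
    · exact (hf.matrix_det.continuousOn).inv₀ hdet
    · exact ((hf.matrix_adjugate).matrix_elem i j).continuousOn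
  obtain ⟨M, hM⟩ := hS.exists_bound_of_continuousOn hgc
  refine ⟨M, fun x hx i j => ?_⟩
  have hentry : σ x * (f x)⁻¹ i j = g x i j := by
    rw [hg]
    simp only
    rw [Matrix.inv_def, Ring.inverse_eq_inv, Matrix.smul_apply, smul_eq_mul]
  rw [hentry]
  calc ‖g x i j‖ = ‖g x i j‖ := rfl
    _ ≤ ‖g x i‖ := norm_le_pi_norm (g x i) j
    _ ≤ ‖g x‖ := norm_le_pi_norm (g x) i
    _ ≤ M := hM x hx

def D1 : Set ℂ := {z : ℂ | z.re ≤ 0} ∩ Metric.closedBall 0 1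

lemma D1_compact : IsCompact D1 :=
  IsCompact.inter_left (isCompact_closedBall 0 1)
    (isClosed_le Complex.continuous_re continuous_const)

lemma mem_D1 {z : ℂ} (h1 : z.re ≤ 0) (h2 : ‖z‖ ≤ 1) : z ∈ D1 := by
  constructor
  · exact h1
  · rw [Metric.mem_closedBall, Complex.dist_eq, sub_zero]
    exact h2

lemma cont_f1 : Continuous (fun lam : ℂ => (1 : Matrix (Fin s) (Fin s) ℂ) - lam • collocAC s c) :=
  continuous_const.sub (continuous_id.smul continuous_const)

lemma cont_f2 : Continuous (fun mu : ℂ => collocAC s c - mu • (1 : Matrix (Fin s) (Fin s) ℂ)) :=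
  continuous_const.sub (continuous_id.smul continuous_const)

lemma f2_eq (mu : ℂ) (hmu : mu ≠ 0) :
    collocAC s c - mu • (1 : Matrix (Fin s) (Fin s) ℂ)
      = (-mu) • ((1 : Matrix (Fin s) (Fin s) ℂ) - mu⁻¹ • collocAC s c) := by
  rw [smul_sub, smul_smul, neg_mul, mul_inv_cancel₀ hmu, neg_smul, neg_smul, one_smul,
    sub_neg_eq_add]
  abel

lemma hdet2 (hs : 1 ≤ s) (hinj : Function.Injective c)
    (hroot : ∀ z : ℂ, z.re ≤ 0 → Polynomial.aeval z (tauP (piPoly s c)) ≠ 0)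
    (mu : ℂ) (hmu : mu ∈ D1) :
    (collocAC s c - mu • (1 : Matrix (Fin s) (Fin s) ℂ)).det ≠ 0 := by
  by_cases hmu0 : mu = 0
  · subst hmu0
    rw [zero_smul, sub_zero]
    exact detA_ne s c hs hinj hroot
  · rw [f2_eq s c mu hmu0, Matrix.det_smul]
    apply mul_ne_zero (pow_ne_zero _ (neg_ne_zero.mpr hmu0))
    have hre : (mu⁻¹).re ≤ 0 := by
      rw [Complex.inv_re]
      exact div_nonpos_of_nonpos_of_nonneg hmu.1 (Complex.normSq_nonneg mu)
    exact (unit_det s c hs hinj hroot mu⁻¹ hre).ne_zero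

lemma inv_eq_chart2 (hs : 1 ≤ s) (hinj : Function.Injective c)
    (hroot : ∀ z : ℂ, z.re ≤ 0 → Polynomial.aeval z (tauP (piPoly s c)) ≠ 0)
    (lam : ℂ) (hlam : lam ≠ 0) (hmu : lam⁻¹ ∈ D1) :
    ((1 : Matrix (Fin s) (Fin s) ℂ) - lam • collocAC s c)⁻¹
      = (-lam⁻¹) • (collocAC s c - lam⁻¹ • (1 : Matrix (Fin s) (Fin s) ℂ))⁻¹ := by
  apply Matrix.inv_eq_right_inv
  have hM : (1 : Matrix (Fin s) (Fin s) ℂ) - lam • collocAC s c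
      = (-lam) • (collocAC s c - lam⁻¹ • (1 : Matrix (Fin s) (Fin s) ℂ)) := by
    rw [smul_sub, smul_smul, neg_mul, mul_inv_cancel₀ hlam, neg_smul, neg_smul, one_smul,
      sub_neg_eq_add]
    abel
  rw [hM, Matrix.smul_mul, Matrix.mul_smul, smul_smul]
  rw [Matrix.mul_nonsing_inv _ (isUnit_iff_ne_zero.mpr (hdet2 s c hs hinj hroot lam⁻¹ hmu))]
  rw [neg_mul_neg, mul_inv_cancel₀ hlam, one_smul]

lemma lam_entry_bound (hs : 1 ≤ s) (hinj : Function.Injective c)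
    (hroot : ∀ z : ℂ, z.re ≤ 0 → Polynomial.aeval z (tauP (piPoly s c)) ≠ 0) :
    (∃ M : ℝ, ∀ lam : ℂ, lam.re ≤ 0 → ∀ i j,
      ‖((1 - lam • collocAC s c)⁻¹) i j‖ ≤ M) ∧
    (∃ M : ℝ, ∀ lam : ℂ, lam.re ≤ 0 → ∀ i j,
      ‖lam * ((1 - lam • collocAC s c)⁻¹) i j‖ ≤ M) := by
  have hdet1 : ∀ lam ∈ D1, ((1 : Matrix (Fin s) (Fin s) ℂ) - lam • collocAC s c).det ≠ 0 :=
    fun lam hlam => (unit_det s c hs hinj hroot lam hlam.1).ne_zero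
  have hdet2' := hdet2 s c hs hinj hroot
  obtain ⟨M1, hM1⟩ := bound_smul_inv_on s (D1) D1_compact (fun _ => 1) continuous_const _
    (cont_f1 s c) hdet1
  obtain ⟨M1', hM1'⟩ := bound_smul_inv_on s (D1) D1_compact (fun z => z) continuous_id _
    (cont_f1 s c) hdet1
  obtain ⟨M2, hM2⟩ := bound_smul_inv_on s (D1) D1_compact (fun z => -z) (continuous_neg) _
    (cont_f2 s c) hdet2'
  obtain ⟨M2', hM2'⟩ := bound_smul_inv_on s (D1) D1_compact (fun _ => -1) continuous_const _
    (cont_f2 s c) hdet2'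
  have hsplit : ∀ lam : ℂ, lam.re ≤ 0 → ¬ (‖lam‖ ≤ 1) →
      lam ≠ 0 ∧ lam⁻¹ ∈ D1 := by
    intro lam hre habs
    push_neg at habs
    have hlam : lam ≠ 0 := by
      intro h
      rw [h] at habs
      simp at habs
      exact absurd habs (by norm_num)
    refine ⟨hlam, mem_D1 ?_ ?_⟩
    · rw [Complex.inv_re]
      exact div_nonpos_of_nonpos_of_nonneg hre (Complex.normSq_nonneg lam)
    · rw [norm_inv]
      exact inv_le_one_of_one_le₀ habs.le
  constructor
  · refine ⟨max M1 M2, fun lam hre i j => ?_⟩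
    by_cases habs : ‖lam‖ ≤ 1
    · have h := hM1 lam (mem_D1 hre habs) i j
      rw [one_mul] at h
      exact h.trans (le_max_left _ _)
    · obtain ⟨hlam, hmu⟩ := hsplit lam hre habs
      rw [inv_eq_chart2 s c hs hinj hroot lam hlam hmu, Matrix.smul_apply, smul_eq_mul]
      exact (hM2 lam⁻¹ hmu i j).trans (le_max_right _ _)
  · refine ⟨max M1' M2', fun lam hre i j => ?_⟩
    by_cases habs : ‖lam‖ ≤ 1
    · exact (hM1' lam (mem_D1 hre habs) i j).trans (le_max_left _ _)
    · obtain ⟨hlam, hmu⟩ := hsplit lam hre habs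
      rw [inv_eq_chart2 s c hs hinj hroot lam hlam hmu, Matrix.smul_apply, smul_eq_mul]
      have hsc : lam * -lam⁻¹ = -1 := by
        field_simp
      rw [← mul_assoc, hsc]
      exact (hM2' lam⁻¹ hmu i j).trans (le_max_right _ _)

end Main4

end AuxProof

/-- a collocation method with points symmetric with respect to `1/2` such that
`τ(π)` has no root in `ℂ⁻` is `Â`-stable. -/
theorem symmetric_hatA_stable (s : ℕ) (hs : 1 ≤ s) (c : Fin s → ℝ) (hc : StrictMono c)
    (hsym : ∀ i : Fin s, c i + c i.rev = 1)
    (hroot : ∀ z : ℂ, z.re ≤ 0 → Polynomial.aeval z (tauP (piPoly s c)) ≠ 0) :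
    AStable s c ∧ ASStable s c ∧ ASIStable s c := by
  have hinj := hc.injective
  have hA : AStable s c := fun lam hre _ => abs_stabR_le s c hs hinj hsym hroot lam hre
  have hunit : ∀ lam : ℂ, lam.re ≤ 0 → IsUnit (1 - lam • collocAC s c).det :=
    fun lam hre => unit_det s c hs hinj hroot lam hre
  obtain ⟨⟨Mi, hMi⟩, ⟨Ml, hMl⟩⟩ := lam_entry_bound s c hs hinj hroot
  refine ⟨hA, ⟨hunit, ?_⟩, hunit, ⟨Mi, fun lam hre i j => hMi lam hre i j⟩⟩
  refine ⟨(∑ i, ‖collocBC s c i‖) * Ml, fun lam hre j => ?_⟩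
  have hvm : lam * (collocBC s c ᵥ* (1 - lam • collocAC s c)⁻¹) j
      = ∑ i, collocBC s c i * (lam * ((1 - lam • collocAC s c)⁻¹) i j) := by
    have h1 : (collocBC s c ᵥ* (1 - lam • collocAC s c)⁻¹) j
        = ∑ i, collocBC s c i * ((1 - lam • collocAC s c)⁻¹) i j := rfl
    rw [h1, Finset.mul_sum]
    refine Finset.sum_congr rfl fun i _ => ?_
    ring
  rw [hvm]
  calc ‖∑ i, collocBC s c i * (lam * ((1 - lam • collocAC s c)⁻¹) i j)‖
      ≤ ∑ i, ‖collocBC s c i * (lam * ((1 - lam • collocAC s c)⁻¹) i j)‖ :=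
        norm_sum_le _ _
    _ = ∑ i, ‖collocBC s c i‖
          * ‖lam * ((1 - lam • collocAC s c)⁻¹) i j‖ := by
        refine Finset.sum_congr rfl fun i _ => ?_
        rw [norm_mul]
    _ ≤ ∑ i, ‖collocBC s c i‖ * Ml := by
        refine Finset.sum_le_sum fun i _ => ?_
        exact mul_le_mul_of_nonneg_left (hMl lam hre i j) (norm_nonneg _)
    _ = (∑ i, ‖collocBC s c i‖) * Ml := by rw [Finset.sum_mul]
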